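/- Witnessed completeness for GL_h: if Γ ⊢_{GL} A in ordinary GL, then for any witnesses v for Γ and w for A, Γ(v) ⊢_{GL_h} A(w). -/

import Mathlib

/-- Poly-modal formulas with modalities `□n` for `n : ℕ`. -/
inductive Fm : Type
  | atom : ℕ → Fm
  | bot  : Fm
  | and  : Fm → Fm → Fm
  | or   : Fm → Fm → Fm
  | imp  : Fm → Fm → Fm
  | neg  : Fm → Fm
  | box  : ℕ → Fm → Fm
  deriving DecidableEq

def Fm.top : Fm := Fm.neg Fm.bot

/-- `i` occurs as a modality index in the formula. -/
def occursBox (i : ℕ) : Fm → Prop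
  | .atom _ => False
  | .bot => False
  | .and A B => occursBox i A ∨ occursBox i B
  | .or A B => occursBox i A ∨ occursBox i B
  | .imp A B => occursBox i A ∨ occursBox i B
  | .neg A => occursBox i A
  | .box n A => i = n ∨ occursBox i A

/-- `n` is strictly greater than every modality index occurring in `A`
    (the paper's "`n > r(A)`"). -/
def BoxLt (A : Fm) (n : ℕ) : Prop := ∀ i, occursBox i A → i < n

/-- The language `L∞`: each box index strictly exceeds all box indices in its scope. -/
inductive Linf : Fm → Prop
  | atom (k : ℕ) : Linf (.atom k)
  | bot : Linf .bot
  | and {A B : Fm} : Linf A → Linf B → Linf (.and A B)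
  | or {A B : Fm} : Linf A → Linf B → Linf (.or A B)
  | imp {A B : Fm} : Linf A → Linf B → Linf (.imp A B)
  | neg {A : Fm} : Linf A → Linf (.neg A)
  | box {A : Fm} (n : ℕ) : Linf A → BoxLt A n → Linf (.box n A)

/-- Boolean evaluation treating atoms and boxed formulas as propositional atoms. -/
def evalWith (v : Fm → Bool) : Fm → Bool
  | .atom k => v (.atom k)
  | .bot => false
  | .and A B => evalWith v A && evalWith v B
  | .or A B => evalWith v A || evalWith v B
  | .imp A B => !(evalWith v A) || evalWith v B
  | .neg A => !(evalWith v A)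
  | .box n A => v (.box n A)

/-- Classical propositional tautologies (on `L∞`-formulas as atoms). -/
def Taut (A : Fm) : Prop := ∀ v, evalWith v A = true

def axH (F : Fm) : Prop := ∃ A n, Linf (Fm.box n A) ∧ F = (Fm.box n A).imp (Fm.box (n+1) A)
def axK (F : Fm) : Prop := ∃ A B n, Linf (Fm.box n (A.imp B)) ∧
    F = (Fm.box n (A.imp B)).imp ((Fm.box n A).imp (Fm.box n B))
def axFour (F : Fm) : Prop := ∃ A n, Linf (Fm.box n A) ∧
    F = (Fm.box n A).imp (Fm.box (n+1) (Fm.box n A))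
def axD (F : Fm) : Prop := ∃ n, F = Fm.neg (Fm.box n Fm.bot)
def axT (F : Fm) : Prop := ∃ A n, Linf (Fm.box n A) ∧ F = (Fm.box n A).imp A
def axL (F : Fm) : Prop := ∃ A n, Linf (Fm.box n A) ∧
    F = (Fm.box (n+1) ((Fm.box n A).imp A)).imp (Fm.box n A)
def axFive (F : Fm) : Prop := ∃ A n, Linf (Fm.box n A) ∧
    F = ((Fm.box n A).neg).imp (Fm.box (n+1) ((Fm.box n A).neg))

/-- Hilbert-style provability over `L∞` from a set of axiom (schema instances):
    classical tautologies, modus ponens, and necessitation restricted to `n > r(A)`. -/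
inductive Prv (Ax : Fm → Prop) : Fm → Prop
  | ax {A : Fm} : Ax A → Prv Ax A
  | taut {A : Fm} : Linf A → Taut A → Prv Ax A
  | mp {A B : Fm} : Prv Ax (A.imp B) → Prv Ax A → Prv Ax B
  | nec {A : Fm} (n : ℕ) : Prv Ax A → BoxLt A n → Prv Ax (Fm.box n A)

def K4hAx (F : Fm) : Prop := axH F ∨ axK F ∨ axFour F
def KD4hAx (F : Fm) : Prop := K4hAx F ∨ axD F
def S4hAx (F : Fm) : Prop := K4hAx F ∨ axT F
def GLhAx (F : Fm) : Prop := K4hAx F ∨ axL F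
def KD45hAx (F : Fm) : Prop := KD4hAx F ∨ axFive F

def K4h : Fm → Prop := Prv K4hAx
def KD4h : Fm → Prop := Prv KD4hAx
def S4h : Fm → Prop := Prv S4hAx
def GLh : Fm → Prop := Prv GLhAx

def conjList (l : List Fm) : Fm := l.foldr Fm.and Fm.top
def disjList (l : List Fm) : Fm := l.foldr Fm.or Fm.bot

/-- `Γ ⊢_L A` : some finite conjunction of members of `Γ` implies `A` in `L`. -/
def Deriv (Ax : Fm → Prop) (Γ : Set Fm) (A : Fm) : Prop :=
  ∃ l : List Fm, (∀ B ∈ l, B ∈ Γ) ∧ Prv Ax ((conjList l).imp A)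

/-- Ordinary unimodal formulas. -/
inductive UFm : Type
  | atom : ℕ → UFm
  | bot : UFm
  | and : UFm → UFm → UFm
  | or : UFm → UFm → UFm
  | imp : UFm → UFm → UFm
  | neg : UFm → UFm
  | box : UFm → UFm
  deriving DecidableEq

/-- The forgetful translation `f`: sends `□n` to `□`. An `L∞` formula `B` with
    `forget B = A` is exactly a witnessed version `A(w)` of `A`. -/
def forget : Fm → UFm
  | .atom k => .atom k
  | .bot => .bot
  | .and A B => (forget A).and (forget B)
  | .or A B => (forget A).or (forget B)
  | .imp A B => (forget A).imp (forget B)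
  | .neg A => (forget A).neg
  | .box _ A => UFm.box (forget A)

def uevalWith (v : UFm → Bool) : UFm → Bool
  | .atom k => v (.atom k)
  | .bot => false
  | .and A B => uevalWith v A && uevalWith v B
  | .or A B => uevalWith v A || uevalWith v B
  | .imp A B => !(uevalWith v A) || uevalWith v B
  | .neg A => !(uevalWith v A)
  | .box A => v (.box A)

def UTaut (A : UFm) : Prop := ∀ v, uevalWith v A = true

/-- Ordinary unimodal Gödel–Löb provability logic `GL`. -/
inductive GLu : UFm → Prop
  | taut {A} : UTaut A → GLu A
  | axK (A B : UFm) : GLu ((UFm.box (A.imp B)).imp ((UFm.box A).imp (UFm.box B)))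
  | axFour (A : UFm) : GLu ((UFm.box A).imp (UFm.box (UFm.box A)))
  | axLob (A : UFm) : GLu ((UFm.box ((UFm.box A).imp A)).imp (UFm.box A))
  | mp {A B} : GLu (A.imp B) → GLu A → GLu B
  | nec {A} : GLu A → GLu (UFm.box A)

def conjU (l : List UFm) : UFm := l.foldr UFm.and (UFm.neg UFm.bot)

/-- `Γ ⊢_{GL} A`. -/
def DerivU (Γ : Set UFm) (A : UFm) : Prop :=
  ∃ l : List UFm, (∀ B ∈ l, B ∈ Γ) ∧ GLu ((conjU l).imp A)

/-! ### Auxiliary development -/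

lemma BoxLt.mono {A : Fm} {n m : ℕ} (h : BoxLt A n) (hnm : n ≤ m) : BoxLt A m :=
  fun i hi => lt_of_lt_of_le (h i hi) hnm

lemma Linf.box_inv {n : ℕ} {A : Fm} (h : Linf (Fm.box n A)) : Linf A ∧ BoxLt A n := by
  cases h; exact ⟨‹_›, ‹_›⟩

section Prop'
variable {Ax : Fm → Prop}

lemma prv_id {A : Fm} (hA : Linf A) : Prv Ax (A.imp A) :=
  Prv.taut (Linf.imp hA hA)
    (by intro v; simp only [Taut, evalWith]; cases evalWith v A <;> rfl)

lemma prv_trans {A B C : Fm} (hA : Linf A) (hB : Linf B) (hC : Linf C)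
    (h1 : Prv Ax (A.imp B)) (h2 : Prv Ax (B.imp C)) : Prv Ax (A.imp C) := by
  have t : Prv Ax ((A.imp B).imp ((B.imp C).imp (A.imp C))) :=
    Prv.taut (Linf.imp (Linf.imp hA hB) (Linf.imp (Linf.imp hB hC) (Linf.imp hA hC)))
      (by intro v; simp only [evalWith]
          cases evalWith v A <;> cases evalWith v B <;> cases evalWith v C <;> rfl)
  exact Prv.mp (Prv.mp t h1) h2

lemma prv_and_mono {A A' B B' : Fm} (hA : Linf A) (hA' : Linf A') (hB : Linf B) (hB' : Linf B')
    (h1 : Prv Ax (A.imp A')) (h2 : Prv Ax (B.imp B')) :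
    Prv Ax ((A.and B).imp (A'.and B')) := by
  have t : Prv Ax ((A.imp A').imp ((B.imp B').imp ((A.and B).imp (A'.and B')))) :=
    Prv.taut (Linf.imp (Linf.imp hA hA') (Linf.imp (Linf.imp hB hB')
        (Linf.imp (Linf.and hA hB) (Linf.and hA' hB'))))
      (by intro v; simp only [evalWith]
          cases evalWith v A <;> cases evalWith v A' <;> cases evalWith v B <;>
            cases evalWith v B' <;> rfl)
  exact Prv.mp (Prv.mp t h1) h2

lemma prv_or_mono {A A' B B' : Fm} (hA : Linf A) (hA' : Linf A') (hB : Linf B) (hB' : Linf B')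
    (h1 : Prv Ax (A.imp A')) (h2 : Prv Ax (B.imp B')) :
    Prv Ax ((A.or B).imp (A'.or B')) := by
  have t : Prv Ax ((A.imp A').imp ((B.imp B').imp ((A.or B).imp (A'.or B')))) :=
    Prv.taut (Linf.imp (Linf.imp hA hA') (Linf.imp (Linf.imp hB hB')
        (Linf.imp (Linf.or hA hB) (Linf.or hA' hB'))))
      (by intro v; simp only [evalWith]
          cases evalWith v A <;> cases evalWith v A' <;> cases evalWith v B <;>
            cases evalWith v B' <;> rfl)
  exact Prv.mp (Prv.mp t h1) h2

lemma prv_imp_mono {A A' B B' : Fm} (hA : Linf A) (hA' : Linf A') (hB : Linf B) (hB' : Linf B')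
    (h1 : Prv Ax (A'.imp A)) (h2 : Prv Ax (B.imp B')) :
    Prv Ax ((A.imp B).imp (A'.imp B')) := by
  have t : Prv Ax ((A'.imp A).imp ((B.imp B').imp ((A.imp B).imp (A'.imp B')))) :=
    Prv.taut (Linf.imp (Linf.imp hA' hA) (Linf.imp (Linf.imp hB hB')
        (Linf.imp (Linf.imp hA hB) (Linf.imp hA' hB'))))
      (by intro v; simp only [evalWith]
          cases evalWith v A <;> cases evalWith v A' <;> cases evalWith v B <;>
            cases evalWith v B' <;> rfl)
  exact Prv.mp (Prv.mp t h1) h2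

lemma prv_neg_mono {A A' : Fm} (hA : Linf A) (hA' : Linf A')
    (h1 : Prv Ax (A'.imp A)) : Prv Ax ((A.neg).imp (A'.neg)) := by
  have t : Prv Ax ((A'.imp A).imp ((A.neg).imp (A'.neg))) :=
    Prv.taut (Linf.imp (Linf.imp hA' hA) (Linf.imp (Linf.neg hA) (Linf.neg hA')))
      (by intro v; simp only [evalWith]
          cases evalWith v A <;> cases evalWith v A' <;> rfl)
  exact Prv.mp t h1

lemma prv_imp_resp {X Y Y' Z Z' : Fm} (hX : Linf X) (hY : Linf Y) (hY' : Linf Y')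
    (hZ : Linf Z) (hZ' : Linf Z')
    (h1 : Prv Ax (X.imp (Y'.imp Z'))) (h2 : Prv Ax (Y.imp Y')) (h3 : Prv Ax (Z'.imp Z)) :
    Prv Ax (X.imp (Y.imp Z)) := by
  have t : Prv Ax ((X.imp (Y'.imp Z')).imp ((Y.imp Y').imp ((Z'.imp Z).imp (X.imp (Y.imp Z))))) :=
    Prv.taut (Linf.imp (Linf.imp hX (Linf.imp hY' hZ'))
        (Linf.imp (Linf.imp hY hY') (Linf.imp (Linf.imp hZ' hZ) (Linf.imp hX (Linf.imp hY hZ)))))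
      (by intro v; simp only [evalWith]
          cases evalWith v X <;> cases evalWith v Y <;> cases evalWith v Y' <;>
            cases evalWith v Z <;> cases evalWith v Z' <;> rfl)
  exact Prv.mp (Prv.mp (Prv.mp t h1) h2) h3

end Prop'

/-! ### GLh axiom accessors -/

lemma glh_H {A : Fm} {n : ℕ} (h : Linf (Fm.box n A)) :
    GLh ((Fm.box n A).imp (Fm.box (n+1) A)) :=
  Prv.ax (Or.inl (Or.inl ⟨A, n, h, rfl⟩))

lemma glh_K {A B : Fm} {n : ℕ} (h : Linf (Fm.box n (A.imp B))) :
    GLh ((Fm.box n (A.imp B)).imp ((Fm.box n A).imp (Fm.box n B))) :=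
  Prv.ax (Or.inl (Or.inr (Or.inl ⟨A, B, n, h, rfl⟩)))

lemma glh_four {A : Fm} {n : ℕ} (h : Linf (Fm.box n A)) :
    GLh ((Fm.box n A).imp (Fm.box (n+1) (Fm.box n A))) :=
  Prv.ax (Or.inl (Or.inr (Or.inr ⟨A, n, h, rfl⟩)))

lemma glh_L {A : Fm} {n : ℕ} (h : Linf (Fm.box n A)) :
    GLh ((Fm.box (n+1) ((Fm.box n A).imp A)).imp (Fm.box n A)) :=
  Prv.ax (Or.inr ⟨A, n, h, rfl⟩)

/-! ### Shifting witnesses -/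

lemma glh_down {C : Fm} {n : ℕ} (hC : Linf C) (hn : BoxLt C n) :
    GLh ((Fm.box (n+1) C).imp (Fm.box n C)) := by
  have hb : Linf (Fm.box n C) := Linf.box n hC hn
  set X : Fm := (Fm.box n C).imp C with hXdef
  have hXl : Linf X := Linf.imp hb hC
  have hlt : BoxLt X (n+1) := by
    intro i hi
    rcases hi with hi | hi
    · rcases hi with hi | hi
      · exact hi ▸ Nat.lt_succ_self n
      · exact Nat.lt_succ_of_lt (hn i hi)
    · exact Nat.lt_succ_of_lt (hn i hi)
  have hltCX : BoxLt (C.imp X) (n+1) := by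
    intro i hi
    rcases hi with hi | hi
    · exact Nat.lt_succ_of_lt (hn i hi)
    · exact hlt i hi
  have t0 : GLh (C.imp X) :=
    Prv.taut (Linf.imp hC hXl)
      (by intro v; simp only [hXdef, evalWith]
          cases evalWith v C <;> cases v (Fm.box n C) <;> rfl)
  have t1 : GLh (Fm.box (n+1) (C.imp X)) := Prv.nec (n+1) t0 hltCX
  have t2 : GLh ((Fm.box (n+1) C).imp (Fm.box (n+1) X)) :=
    Prv.mp (glh_K (Linf.box (n+1) (Linf.imp hC hXl) hltCX)) t1
  have t3 : GLh ((Fm.box (n+1) X).imp (Fm.box n C)) := glh_L hb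
  exact prv_trans (Linf.box (n+1) hC (hn.mono (Nat.le_succ n)))
    (Linf.box (n+1) hXl hlt) hb t2 t3

lemma glh_shift {C : Fm} (hC : Linf C) (n m : ℕ) (hn : BoxLt C n) (hm : BoxLt C m) :
    GLh ((Fm.box n C).imp (Fm.box m C)) := by
  have up : ∀ k n, BoxLt C n → GLh ((Fm.box n C).imp (Fm.box (n+k) C)) := by
    intro k
    induction k with
    | zero => exact fun n hn => prv_id (Linf.box n hC hn)
    | succ k ih =>
        intro n hn
        have h1 := ih n hn
        have h2 : GLh ((Fm.box (n+k) C).imp (Fm.box (n+k+1) C)) :=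
          glh_H (Linf.box (n+k) hC (hn.mono (Nat.le_add_right n k)))
        exact prv_trans (Linf.box n hC hn)
          (Linf.box (n+k) hC (hn.mono (Nat.le_add_right n k)))
          (Linf.box (n+k+1) hC (hn.mono (Nat.le_add_right n (k+1))))
          h1 h2
  have down : ∀ k n, BoxLt C n → GLh ((Fm.box (n+k) C).imp (Fm.box n C)) := by
    intro k
    induction k with
    | zero => exact fun n hn => prv_id (Linf.box n hC hn)
    | succ k ih =>
        intro n hn
        have h1 : GLh ((Fm.box (n+k+1) C).imp (Fm.box (n+k) C)) :=
          glh_down hC (hn.mono (Nat.le_add_right n k))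
        exact prv_trans (Linf.box (n+k+1) hC (hn.mono (Nat.le_add_right n (k+1))))
          (Linf.box (n+k) hC (hn.mono (Nat.le_add_right n k)))
          (Linf.box n hC hn) h1 (ih n hn)
  rcases le_total n m with h | h
  · have := up (m - n) n hn
    rwa [Nat.add_sub_cancel' h] at this
  · have := down (n - m) m hm
    rwa [Nat.add_sub_cancel' h] at this

/-! ### Bridge: witnessed versions of the same formula are interderivable -/

lemma glh_bridge : ∀ (B1 : Fm) {B2 : Fm}, Linf B1 → Linf B2 → forget B1 = forget B2 →
    GLh (B1.imp B2) ∧ GLh (B2.imp B1) := by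
  intro B1
  induction B1 with
  | atom k =>
      intro B2 h1 h2 hf
      cases B2 <;> simp [forget] at hf
      subst hf; exact ⟨prv_id h1, prv_id h1⟩
  | bot =>
      intro B2 h1 h2 hf
      cases B2 <;> simp [forget] at hf
      exact ⟨prv_id h1, prv_id h1⟩
  | and A B ihA ihB =>
      intro B2 h1 h2 hf
      cases h1 with | and hA hB => ?_
      cases B2 <;> simp [forget] at hf
      case and A2 B2 =>
      cases h2 with | and hA2 hB2 => ?_
      obtain ⟨e1, e2⟩ := ihA hA hA2 hf.1
      obtain ⟨e1', e2'⟩ := ihB hB hB2 hf.2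
      exact ⟨prv_and_mono hA hA2 hB hB2 e1 e1', prv_and_mono hA2 hA hB2 hB e2 e2'⟩
  | or A B ihA ihB =>
      intro B2 h1 h2 hf
      cases h1 with | or hA hB => ?_
      cases B2 <;> simp [forget] at hf
      case or A2 B2 =>
      cases h2 with | or hA2 hB2 => ?_
      obtain ⟨e1, e2⟩ := ihA hA hA2 hf.1
      obtain ⟨e1', e2'⟩ := ihB hB hB2 hf.2
      exact ⟨prv_or_mono hA hA2 hB hB2 e1 e1', prv_or_mono hA2 hA hB2 hB e2 e2'⟩
  | imp A B ihA ihB =>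
      intro B2 h1 h2 hf
      cases h1 with | imp hA hB => ?_
      cases B2 <;> simp [forget] at hf
      case imp A2 B2 =>
      cases h2 with | imp hA2 hB2 => ?_
      obtain ⟨e1, e2⟩ := ihA hA hA2 hf.1
      obtain ⟨e1', e2'⟩ := ihB hB hB2 hf.2
      exact ⟨prv_imp_mono hA hA2 hB hB2 e2 e1', prv_imp_mono hA2 hA hB2 hB e1 e2'⟩
  | neg A ihA =>
      intro B2 h1 h2 hf
      cases h1 with | neg hA => ?_
      cases B2 <;> simp [forget] at hf
      case neg A2 =>
      cases h2 with | neg hA2 => ?_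
      obtain ⟨e1, e2⟩ := ihA hA hA2 hf
      exact ⟨prv_neg_mono hA hA2 e2, prv_neg_mono hA2 hA e1⟩
  | box n A ihA =>
      intro B2 h1 h2 hf
      obtain ⟨hA, hAn⟩ := h1.box_inv
      cases B2 <;> simp [forget] at hf
      case box m A2 =>
      obtain ⟨hA2, hA2m⟩ := h2.box_inv
      obtain ⟨e1, e2⟩ := ihA hA hA2 hf
      have key : ∀ (C1 C2 : Fm) (n m : ℕ), Linf C1 → Linf C2 → BoxLt C1 n → BoxLt C2 m →
          GLh (C1.imp C2) → GLh ((Fm.box n C1).imp (Fm.box m C2)) := by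
        intro C1 C2 n m hC1 hC2 hn hm he
        set k := max n m with hk
        have hlt : BoxLt (C1.imp C2) k := by
          intro i hi
          rcases hi with hi | hi
          · exact lt_of_lt_of_le (hn i hi) (le_max_left n m)
          · exact lt_of_lt_of_le (hm i hi) (le_max_right n m)
        have t1 : GLh (Fm.box k (C1.imp C2)) := Prv.nec k he hlt
        have t2 : GLh ((Fm.box k C1).imp (Fm.box k C2)) :=
          Prv.mp (glh_K (Linf.box k (Linf.imp hC1 hC2) hlt)) t1
        have s1 : GLh ((Fm.box n C1).imp (Fm.box k C1)) :=
          glh_shift hC1 n k hn (hn.mono (le_max_left n m))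
        have s2 : GLh ((Fm.box k C2).imp (Fm.box m C2)) :=
          glh_shift hC2 k m (hm.mono (le_max_right n m)) hm
        have lb1 : Linf (Fm.box n C1) := Linf.box n hC1 hn
        have lbk1 : Linf (Fm.box k C1) := Linf.box k hC1 (hn.mono (le_max_left n m))
        have lbk2 : Linf (Fm.box k C2) := Linf.box k hC2 (hm.mono (le_max_right n m))
        have lb2 : Linf (Fm.box m C2) := Linf.box m hC2 hm
        exact prv_trans lb1 lbk1 lb2 s1 (prv_trans lbk1 lbk2 lb2 t2 s2)
      exact ⟨key A A2 n m hA hA2 hAn hA2m e1, key A2 A m n hA2 hA hA2m hAn e2⟩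

/-! ### Canonical witness -/

def ud : UFm → ℕ
  | .atom _ => 0
  | .bot => 0
  | .and A B => max (ud A) (ud B)
  | .or A B => max (ud A) (ud B)
  | .imp A B => max (ud A) (ud B)
  | .neg A => ud A
  | .box A => ud A + 1

def can : UFm → Fm
  | .atom k => .atom k
  | .bot => .bot
  | .and A B => .and (can A) (can B)
  | .or A B => .or (can A) (can B)
  | .imp A B => .imp (can A) (can B)
  | .neg A => .neg (can A)
  | .box A => .box (ud A) (can A)

lemma can_boxlt : ∀ A : UFm, BoxLt (can A) (ud A) := by
  intro A
  induction A with
  | atom k => intro i hi; exact absurd hi id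
  | bot => intro i hi; exact absurd hi id
  | and A B ihA ihB =>
      intro i hi
      rcases hi with hi | hi
      · exact lt_of_lt_of_le (ihA i hi) (le_max_left _ _)
      · exact lt_of_lt_of_le (ihB i hi) (le_max_right _ _)
  | or A B ihA ihB =>
      intro i hi
      rcases hi with hi | hi
      · exact lt_of_lt_of_le (ihA i hi) (le_max_left _ _)
      · exact lt_of_lt_of_le (ihB i hi) (le_max_right _ _)
  | imp A B ihA ihB =>
      intro i hi
      rcases hi with hi | hi
      · exact lt_of_lt_of_le (ihA i hi) (le_max_left _ _)
      · exact lt_of_lt_of_le (ihB i hi) (le_max_right _ _)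
  | neg A ihA => exact ihA
  | box A ihA =>
      intro i hi
      rcases hi with hi | hi
      · exact hi ▸ Nat.lt_succ_self _
      · exact Nat.lt_succ_of_lt (ihA i hi)

lemma can_linf : ∀ A : UFm, Linf (can A)
  | .atom k => Linf.atom k
  | .bot => Linf.bot
  | .and A B => Linf.and (can_linf A) (can_linf B)
  | .or A B => Linf.or (can_linf A) (can_linf B)
  | .imp A B => Linf.imp (can_linf A) (can_linf B)
  | .neg A => Linf.neg (can_linf A)
  | .box A => Linf.box (ud A) (can_linf A) (can_boxlt A)

lemma forget_can : ∀ A : UFm, forget (can A) = A := by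
  intro A; induction A <;> simp [can, forget, *]

lemma can_eval (v : Fm → Bool) : ∀ B : UFm,
    evalWith v (can B) = uevalWith (fun X => v (can X)) B := by
  intro B; induction B <;> simp [can, evalWith, uevalWith, *]

/-! ### Main lemma: `GL` proofs transfer to canonical witnesses -/

lemma glh_can {B : UFm} (h : GLu B) : GLh (can B) := by
  induction h with
  | taut ht =>
      exact Prv.taut (can_linf _) (fun v => by rw [can_eval]; exact ht _)
  | axK A B =>
      show GLh ((Fm.box (max (ud A) (ud B)) ((can A).imp (can B))).imp
        ((Fm.box (ud A) (can A)).imp (Fm.box (ud B) (can B))))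
      set k := max (ud A) (ud B) with hk
      have hltA : BoxLt (can A) k := (can_boxlt A).mono (le_max_left _ _)
      have hltB : BoxLt (can B) k := (can_boxlt B).mono (le_max_right _ _)
      have hlt : BoxLt ((can A).imp (can B)) k := by
        intro i hi
        rcases hi with hi | hi
        · exact hltA i hi
        · exact hltB i hi
      have hKax : GLh ((Fm.box k ((can A).imp (can B))).imp
          ((Fm.box k (can A)).imp (Fm.box k (can B)))) :=
        glh_K (Linf.box k (Linf.imp (can_linf A) (can_linf B)) hlt)
      have s1 : GLh ((Fm.box (ud A) (can A)).imp (Fm.box k (can A))) :=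
        glh_shift (can_linf A) (ud A) k (can_boxlt A) hltA
      have s2 : GLh ((Fm.box k (can B)).imp (Fm.box (ud B) (can B))) :=
        glh_shift (can_linf B) k (ud B) hltB (can_boxlt B)
      exact prv_imp_resp (Linf.box k (Linf.imp (can_linf A) (can_linf B)) hlt)
        (Linf.box (ud A) (can_linf A) (can_boxlt A)) (Linf.box k (can_linf A) hltA)
        (Linf.box (ud B) (can_linf B) (can_boxlt B)) (Linf.box k (can_linf B) hltB)
        hKax s1 s2
  | axFour A =>
      exact glh_four (Linf.box (ud A) (can_linf A) (can_boxlt A))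
  | axLob A =>
      have hmax : max (ud A + 1) (ud A) = ud A + 1 := Nat.max_eq_left (Nat.le_succ _)
      show GLh ((Fm.box (max (ud A + 1) (ud A))
          ((Fm.box (ud A) (can A)).imp (can A))).imp (Fm.box (ud A) (can A)))
      rw [hmax]
      exact glh_L (Linf.box (ud A) (can_linf A) (can_boxlt A))
  | mp h1 h2 ih1 ih2 =>
      exact Prv.mp ih1 ih2
  | nec h ih =>
      exact Prv.nec (ud _) ih (can_boxlt _)

/-! ### Conjunction lemmas -/

lemma forget_conjList (l : List Fm) : forget (conjList l) = conjU (l.map forget) := by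
  induction l with
  | nil => rfl
  | cons B l ih => simp [conjList, conjU, forget] at *; exact ih

lemma linf_conjList (l : List Fm) (h : ∀ B ∈ l, Linf B) : Linf (conjList l) := by
  induction l with
  | nil => exact Linf.neg Linf.bot
  | cons B l ih =>
      exact Linf.and (h B (by simp)) (ih (fun C hC => h C (List.mem_cons_of_mem _ hC)))

lemma lift_list (Γ' : Set Fm) : ∀ l : List UFm, (∀ B ∈ l, B ∈ forget '' Γ') →
    ∃ l' : List Fm, (∀ C ∈ l', C ∈ Γ') ∧ l'.map forget = l := by
  intro l
  induction l with
  | nil => exact fun _ => ⟨[], by simp, rfl⟩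
  | cons B l ih =>
      intro h
      obtain ⟨B', hB', hfB⟩ := h B (by simp)
      obtain ⟨l', hl', hm⟩ := ih (fun C hC => h C (List.mem_cons_of_mem _ hC))
      refine ⟨B' :: l', ?_, by simp [hm, hfB]⟩
      intro C hC
      rcases List.mem_cons.mp hC with h | h
      · exact h ▸ hB'
      · exact hl' C h

theorem GLh_witnessed_completeness' (Γ : Set UFm) (A : UFm)
    (h : DerivU Γ A)
    (Γ' : Set Fm) (hΓ' : ∀ B ∈ Γ', Linf B) (hf : forget '' Γ' = Γ)
    (A' : Fm) (hA' : Linf A') (hfA : forget A' = A) :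
    Deriv GLhAx Γ' A' := by
  subst hf; subst hfA
  obtain ⟨l, hl, hprv⟩ := h
  obtain ⟨l', hl', hmap⟩ := lift_list Γ' l hl
  have linfF : Linf ((conjList l').imp A') :=
    Linf.imp (linf_conjList _ (fun B hB => hΓ' B (hl' B hB))) hA'
  have hfF : forget ((conjList l').imp A') = (conjU l).imp (forget A') := by
    simp [forget, forget_conjList, hmap]
  have h1 : GLh (can ((conjU l).imp (forget A'))) := glh_can hprv
  have h2 := (glh_bridge (can ((conjU l).imp (forget A'))) (can_linf _) linfF
    (by rw [forget_can, hfF])).1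
  exact ⟨l', hl', Prv.mp h2 h1⟩

/-- witnessed completeness for `GL_h`: if `Γ ⊢_{GL} A`, then for any
    witnessed versions `Γ(v)` of `Γ` and `A(w)` of `A`, `Γ(v) ⊢_{GL_h} A(w)`. -/
theorem GLh_witnessed_completeness (Γ : Set UFm) (A : UFm)
    (h : DerivU Γ A)
    (Γ' : Set Fm) (hΓ' : ∀ B ∈ Γ', Linf B) (hf : forget '' Γ' = Γ)
    (A' : Fm) (hA' : Linf A') (hfA : forget A' = A) :
    Deriv GLhAx Γ' A' := by
  exact GLh_witnessed_completeness' Γ A h Γ' hΓ' hf A' hA' hfA
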